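/- Let n : [0,∞) → ℝ be a nonnegative function satisfying n(t) = n(0) + ∫₀ᵗ g(s)·n(s) ds where g is measurable and r_min - C_max·n(s) ≤ g(s) ≤ r_max - C_min·n(s) with 0 < r_min ≤ r_max and 0 < C_min ≤ C_max. Then for all t, ñ_low(t) ≤ n(t) ≤ ñ_high(t), where ñ_low and ñ_high are the solutions of the logistic equations m' = (r_min - C_max·m)·m and m' = (r_max - C_min·m)·m with initial value n(0). In particular, if n(0) > 0, then n(t) is bounded between positive bounds uniformly for t ≥ t₀ > 0. -/

import Mathlib

open MeasureTheory intervalIntegral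

section helpers
open Set Filter Topology

lemma antitone_aux {φ : ℝ → ℝ} {a b : ℝ}
    (hcont : ContinuousOn φ (Icc a b))
    (hderiv : ∀ t ∈ Ioo a b, ∃ d, HasDerivAt φ d t ∧ d ≤ 0) :
    AntitoneOn φ (Icc a b) := by
  apply antitoneOn_of_deriv_nonpos (convex_Icc a b) hcont
  · intro x hx
    rw [interior_Icc] at hx
    obtain ⟨d, hd, _⟩ := hderiv x hx
    exact hd.differentiableAt.differentiableWithinAt
  · intro x hx
    rw [interior_Icc] at hx
    obtain ⟨d, hd, hd0⟩ := hderiv x hx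
    rw [hd.deriv]; exact hd0

lemma gron_le_zero {φ : ℝ → ℝ} {a b K : ℝ}
    (hcont : ContinuousOn φ (Icc a b))
    (hderiv : ∀ t ∈ Ioo a b, ∃ d, HasDerivAt φ d t ∧ d ≤ K * φ t)
    (ha : φ a ≤ 0) : ∀ t ∈ Icc a b, φ t ≤ 0 := by
  intro t ht
  have hab : a ≤ b := le_trans ht.1 ht.2
  set ψ : ℝ → ℝ := fun s => φ s * Real.exp (-(K * s)) with hψdef
  have hmono : AntitoneOn ψ (Icc a b) := by
    apply antitone_aux
    · exact hcont.mul (Continuous.continuousOn (by continuity))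
    · intro s hs
      obtain ⟨d, hd, hdle⟩ := hderiv s hs
      refine ⟨(d - K * φ s) * Real.exp (-(K * s)), ?_, ?_⟩
      · have he : HasDerivAt (fun u => Real.exp (-(K * u))) (Real.exp (-(K * s)) * (-K)) s := by
          have h1 : HasDerivAt (fun u : ℝ => -(K * u)) (-K) s := by
            simpa using ((hasDerivAt_id s).const_mul K).fun_neg
          simpa [Function.comp_def] using (Real.hasDerivAt_exp (-(K * s))).comp s h1
        have := hd.fun_mul he
        refine this.congr_deriv ?_
        ring
      · have : d - K * φ s ≤ 0 := by linarith
        exact mul_nonpos_of_nonpos_of_nonneg this (Real.exp_nonneg _)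
  have h1 : ψ t ≤ ψ a := hmono (left_mem_Icc.2 hab) ht ht.1
  have h2 : ψ a ≤ 0 := mul_nonpos_of_nonpos_of_nonneg ha (Real.exp_nonneg _)
  by_contra hpos
  push_neg at hpos
  have : 0 < ψ t := mul_pos hpos (Real.exp_pos _)
  linarith

lemma first_cross {w : ℝ → ℝ} {a b : ℝ} (hab : a ≤ b)
    (hcont : ContinuousOn w (Icc a b)) (hwa : w a ≤ 0) (hwb : 0 < w b) :
    ∃ τ, τ ∈ Ico a b ∧ w τ = 0 ∧ ∀ s ∈ Ioc τ b, 0 < w s := by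
  set S := {s ∈ Icc a b | w s ≤ 0} with hS
  have hSclosed : IsClosed S := by
    have heq : S = Icc a b ∩ w ⁻¹' (Iic 0) := by ext x; simp only [hS, mem_setOf_eq, mem_inter_iff, mem_preimage, mem_Iic]
    rw [heq]
    exact hcont.preimage_isClosed_of_isClosed isClosed_Icc isClosed_Iic
  have hSne : S.Nonempty := ⟨a, ⟨left_mem_Icc.2 hab, hwa⟩⟩
  have hSbdd : BddAbove S := ⟨b, fun x hx => hx.1.2⟩
  set τ := sSup S with hτdef
  have hτS : τ ∈ S := hSclosed.csSup_mem hSne hSbdd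
  have hpos : ∀ s ∈ Ioc τ b, 0 < w s := by
    intro s hs
    by_contra hle
    push_neg at hle
    have hsS : s ∈ S := ⟨⟨le_trans hτS.1.1 hs.1.le, hs.2⟩, hle⟩
    exact absurd (le_csSup hSbdd hsS) (not_le.2 hs.1)
  have hτb : τ < b := by
    rcases lt_or_eq_of_le hτS.1.2 with h | h
    · exact h
    · exfalso; have h2 := hτS.2; rw [h] at h2; linarith
  have hIocmem : Ioc τ b ∈ 𝓝[>] τ := Ioc_mem_nhdsGT_of_mem ⟨le_refl τ, hτb⟩
  have h0 : 0 ≤ w τ := by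
    have hcw : Tendsto w (𝓝[>] τ) (𝓝 (w τ)) := by
      have h1 : ContinuousWithinAt w (Icc a b) τ := hcont τ hτS.1
      exact h1.mono_left (nhdsWithin_le_of_mem (mem_of_superset hIocmem
        (Ioc_subset_Icc_self.trans (Icc_subset_Icc_left hτS.1.1))))
    exact ge_of_tendsto hcw (eventually_of_mem hIocmem (fun s hs => (hpos s hs).le))
  exact ⟨τ, ⟨hτS.1.1, hτb⟩, le_antisymm hτS.2 h0, hpos⟩


section main
variable {rmin rmax Cmin Cmax : ℝ} {n g : ℝ → ℝ}

lemma contOfGood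
    (hsol : ∀ t, 0 ≤ t → n t = n 0 + ∫ s in (0:ℝ)..t, g s * n s)
    {T : ℝ}
    (hgood : IntegrableOn (fun s => g s * n s) (Ioc 0 T)) :
    ContinuousOn n (Icc 0 T) := by
  have hIcc : IntegrableOn (fun s => g s * n s) (Icc 0 T) := by
    rwa [integrableOn_Icc_iff_integrableOn_Ioc]
  have hc := continuousOn_primitive_Icc (a := 0) (b := T) hIcc
  have hc2 : ContinuousOn (fun x => n 0 + ∫ t in Icc 0 x, g t * n t) (Icc 0 T) :=
    continuousOn_const.add hc
  apply hc2.congr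
  intro x hx
  rw [hsol x hx.1, intervalIntegral.integral_of_le hx.1, ← integral_Icc_eq_integral_Ioc]

lemma boundOfGood
    (hrmax : 0 < rmax) (hCmin : 0 ≤ Cmin)
    (hnpos : ∀ t, 0 ≤ t → 0 ≤ n t)
    (hgupper : ∀ s, 0 ≤ s → g s ≤ rmax - Cmin * n s)
    (hsol : ∀ t, 0 ≤ t → n t = n 0 + ∫ s in (0:ℝ)..t, g s * n s)
    {T : ℝ} (hT : 0 ≤ T)
    (hgood : IntegrableOn (fun s => g s * n s) (Ioc 0 T)) :
    ∀ t ∈ Icc 0 T, n t ≤ n 0 * Real.exp (rmax * t) := by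
  have hcn : ContinuousOn n (Icc 0 T) := contOfGood hsol hgood
  have hn0 : 0 ≤ n 0 := hnpos 0 le_rfl
  have hqI : ∀ t ∈ Icc (0:ℝ) T, IntervalIntegrable (fun s => g s * n s) volume 0 t := by
    intro t ht
    rw [intervalIntegrable_iff_integrableOn_Ioc_of_le ht.1]
    exact hgood.mono_set (Ioc_subset_Ioc_right ht.2)
  have hrncont : ContinuousOn (fun s => rmax * n s) (Icc 0 T) := continuousOn_const.mul hcn
  have hrnI : ∀ t ∈ Icc (0:ℝ) T, IntervalIntegrable (fun s => rmax * n s) volume 0 t := by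
    intro t ht
    apply ContinuousOn.intervalIntegrable
    rw [uIcc_of_le ht.1]
    exact hrncont.mono (Icc_subset_Icc_right ht.2)
  set B : ℝ → ℝ := fun t => n 0 + ∫ s in (0:ℝ)..t, rmax * n s with hBdef
  have hnB : ∀ t ∈ Icc 0 T, n t ≤ B t := by
    intro t ht
    rw [hsol t ht.1]
    apply add_le_add le_rfl
    apply intervalIntegral.integral_mono_on ht.1 (hqI t ht) (hrnI t ht)
    intro s hs
    have hns := hnpos s hs.1
    have hgu := hgupper s hs.1
    nlinarith [mul_nonneg hCmin hns]
  -- continuity of B on Icc 0 T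
  have hrnIcc : IntegrableOn (fun s => rmax * n s) (Icc 0 T) := hrncont.integrableOn_Icc
  have hBc : ContinuousOn B (Icc 0 T) := by
    have hc := continuousOn_primitive_Icc (a := 0) (b := T) hrnIcc
    apply ((continuousOn_const (c := n 0)).add hc).congr
    intro x hx
    simp only [hBdef]
    rw [intervalIntegral.integral_of_le hx.1, ← integral_Icc_eq_integral_Ioc]
    rfl
  set φ : ℝ → ℝ := fun t => B t * Real.exp (-(rmax * t)) - n 0 with hφdef
  have hφle : ∀ t ∈ Icc 0 T, φ t ≤ 0 := by
    apply gron_le_zero (K := 0)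
    · have hec : Continuous fun u : ℝ => Real.exp (-(rmax * u)) :=
        Real.continuous_exp.comp (continuous_const.mul continuous_id).neg
      exact (hBc.mul hec.continuousOn).sub continuousOn_const
    · intro t ht
      have htIcc : t ∈ Icc (0:ℝ) T := Ioo_subset_Icc_self ht
      have hBt : HasDerivAt B (rmax * n t) t := by
        have h2 : StronglyMeasurableAtFilter (fun s => rmax * n s) (𝓝 t) volume :=
          ContinuousOn.stronglyMeasurableAtFilter isOpen_Ioo
            (hrncont.mono Ioo_subset_Icc_self) t ht
        have h3 : ContinuousAt (fun s => rmax * n s) t :=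
          (hrncont.continuousAt (Icc_mem_nhds ht.1 ht.2))
        exact HasDerivAt.const_add (n 0)
          (intervalIntegral.integral_hasDerivAt_right (hrnI t htIcc) h2 h3)
      have hE : HasDerivAt (fun u => Real.exp (-(rmax * u))) (Real.exp (-(rmax * t)) * (-rmax)) t := by
        have h1 : HasDerivAt (fun u : ℝ => -(rmax * u)) (-rmax) t := by
          simpa using ((hasDerivAt_id t).const_mul rmax).fun_neg
        simpa [Function.comp_def] using (Real.hasDerivAt_exp (-(rmax * t))).comp t h1
      refine ⟨(rmax * n t) * Real.exp (-(rmax * t)) + B t * (Real.exp (-(rmax * t)) * (-rmax)), ?_, ?_⟩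
      · exact (hBt.mul hE).sub_const (n 0)
      · have h4 := hnB t htIcc
        have h5 := Real.exp_pos (-(rmax * t))
        have heq : rmax * n t * Real.exp (-(rmax * t)) + B t * (Real.exp (-(rmax * t)) * (-rmax))
            = rmax * Real.exp (-(rmax * t)) * (n t - B t) := by ring
        rw [heq]
        have : 0 * φ t = 0 := by ring
        rw [this]
        have := mul_pos hrmax h5
        nlinarith
    · simp [hφdef, hBdef]
  intro t ht
  have h1 := hφle t ht
  have h2 := hnB t ht
  have hE1 : Real.exp (-(rmax * t)) * Real.exp (rmax * t) = 1 := by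
    rw [← Real.exp_add]; simp
  have h5 := Real.exp_pos (rmax * t)
  have h6 := Real.exp_pos (-(rmax * t))
  simp only [hφdef] at h1
  nlinarith

-- |g s| ≤ rmax + Cmax * n s for s ≥ 0
lemma absg (hrmin : 0 < rmin) (hrmax : 0 < rmax) (hCmin : 0 ≤ Cmin) (hCmax : 0 ≤ Cmax)
    (hnpos : ∀ t, 0 ≤ t → 0 ≤ n t)
    (hgbound : ∀ s, 0 ≤ s → rmin - Cmax * n s ≤ g s ∧ g s ≤ rmax - Cmin * n s)
    {s : ℝ} (hs : 0 ≤ s) : |g s| ≤ rmax + Cmax * n s := by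
  have h1 := (hgbound s hs).1
  have h2 := (hgbound s hs).2
  have hns := hnpos s hs
  rw [abs_le]
  constructor
  · nlinarith [mul_nonneg hCmax hns]
  · nlinarith [mul_nonneg hCmin hns, mul_nonneg hCmax hns]

lemma good_all (hrmin : 0 < rmin) (hrmax : 0 < rmax) (hCmin : 0 ≤ Cmin) (hCmax : 0 ≤ Cmax)
    (hnpos : ∀ t, 0 ≤ t → 0 ≤ n t)
    (hg : Measurable g)
    (hgbound : ∀ s, 0 ≤ s → rmin - Cmax * n s ≤ g s ∧ g s ≤ rmax - Cmin * n s)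
    (hsol : ∀ t, 0 ≤ t → n t = n 0 + ∫ s in (0:ℝ)..t, g s * n s) :
    ∀ T : ℝ, IntegrableOn (fun s => g s * n s) (Ioc 0 T) := by
  set q : ℝ → ℝ := fun s => g s * n s with hq
  set Good : Set ℝ := {T | IntegrableOn q (Ioc 0 T)} with hGood
  have hdown : ∀ ⦃T T' : ℝ⦄, T ∈ Good → T' ≤ T → T' ∈ Good := fun T T' hT h =>
    hT.mono_set (Ioc_subset_Ioc_right h)
  have h0 : (0:ℝ) ∈ Good := by
    simp only [hGood, mem_setOf_eq, Ioc_self]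
    exact integrableOn_empty
  -- suffices to show Good has no finite sup
  by_cases hbdd : BddAbove Good
  swap
  · intro T
    obtain ⟨x, hxG, hx⟩ := not_bddAbove_iff.1 hbdd T
    exact hdown hxG hx.le
  · exfalso
    set Ts := sSup Good with hTs
    have hTs0 : 0 ≤ Ts := le_csSup hbdd h0
    have hIco : ∀ s, s < Ts → s ∈ Good := by
      intro s hs
      obtain ⟨x, hxG, hx⟩ := exists_lt_of_lt_csSup ⟨0, h0⟩ hs
      exact hdown hxG hx.le
    -- n is continuous, hence bounded by the exp bound, on Ioo 0 Ts
    have hcn : ContinuousOn n (Ioo 0 Ts) := by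
      intro t ht
      have hmid : (t + Ts) / 2 ∈ Good := hIco _ (by linarith [ht.2])
      have h1 : ContinuousOn n (Icc 0 ((t + Ts)/2)) := contOfGood hsol hmid
      have h2 : ContinuousAt n t :=
        h1.continuousAt (Icc_mem_nhds ht.1 (by linarith [ht.2]))
      exact h2.continuousWithinAt
    have hnK : ∀ s ∈ Ioo (0:ℝ) Ts, n s ≤ n 0 * Real.exp (rmax * Ts) := by
      intro s hs
      have hmid : (s + Ts) / 2 ∈ Good := hIco _ (by linarith [hs.2])
      have h1 := boundOfGood hrmax hCmin hnpos (fun u hu => (hgbound u hu).2) hsol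
        (by linarith [hs.1, hs.2] : (0:ℝ) ≤ (s + Ts)/2) hmid s
        ⟨hs.1.le, by linarith [hs.2]⟩
      refine h1.trans ?_
      have := hnpos 0 le_rfl
      have : Real.exp (rmax * s) ≤ Real.exp (rmax * Ts) :=
        Real.exp_le_exp.2 (by nlinarith [hs.1, hs.2])
      nlinarith [hnpos 0 le_rfl]
    -- Ts ∈ Good
    have hTsGood : Ts ∈ Good := by
      set K : ℝ := n 0 * Real.exp (rmax * Ts) with hK
      have hK0 : 0 ≤ K := mul_nonneg (hnpos 0 le_rfl) (Real.exp_nonneg _)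
      have hmeas : AEStronglyMeasurable n (volume.restrict (Ioo 0 Ts)) :=
        (hcn.aemeasurable measurableSet_Ioo).aestronglyMeasurable
      have hqmeas : AEStronglyMeasurable q (volume.restrict (Ioo 0 Ts)) :=
        ((hg.aemeasurable.mul (hcn.aemeasurable measurableSet_Ioo))).aestronglyMeasurable
      have hqbd : ∀ s ∈ Ioo (0:ℝ) Ts, ‖q s‖ ≤ (rmax + Cmax * K) * K := by
        intro s hs
        have hns := hnpos s hs.1.le
        have hnsK := hnK s hs
        have hgabs := absg hrmin hrmax hCmin hCmax hnpos hgbound hs.1.le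
        have h1 : |q s| = |g s| * n s := by
          rw [hq]; rw [abs_mul, abs_of_nonneg hns]
        rw [Real.norm_eq_abs, h1]
        have h2 : |g s| ≤ rmax + Cmax * K := by nlinarith
        have h3 : (0:ℝ) ≤ |g s| := abs_nonneg _
        nlinarith
      have hIoo : IntegrableOn q (Ioo 0 Ts) := by
        apply Integrable.mono' (g := fun _ => (rmax + Cmax * K) * K)
        · exact integrableOn_const measure_Ioo_lt_top.ne
        · exact hqmeas
        · exact (ae_restrict_iff' measurableSet_Ioo).2 (Eventually.of_forall hqbd)
      exact hIoo.congr_set_ae Ioo_ae_eq_Ioc.symm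
    -- everything above Ts is not Good, so n is constant there
    have hnotGood : ∀ s, Ts < s → s ∉ Good := fun s hs hsG =>
      absurd (le_csSup hbdd hsG) (not_le.2 hs)
    have hconst : ∀ s, Ts < s → n s = n 0 := by
      intro s hs
      have hs0 : (0:ℝ) ≤ s := hTs0.trans hs.le
      have hint : ¬ Integrable q (volume.restrict (Ioc 0 s)) := hnotGood s hs
      rw [hsol s hs0, intervalIntegral.integral_of_le hs0]
      rw [MeasureTheory.integral_undef hint]
      ring
    -- q is integrable on Ioc Ts (Ts+1)
    have hupper : IntegrableOn q (Ioc Ts (Ts + 1)) := by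
      have hK0 : (0:ℝ) ≤ n 0 := hnpos 0 le_rfl
      have h1 : IntegrableOn (fun s => g s * n 0) (Ioc Ts (Ts + 1)) := by
        apply Integrable.mono' (g := fun _ => (rmax + Cmax * n 0) * n 0)
        · exact integrableOn_const measure_Ioc_lt_top.ne
        · exact (hg.aemeasurable.mul_const _).aestronglyMeasurable
        · refine (ae_restrict_iff' measurableSet_Ioc).2 (Eventually.of_forall ?_)
          intro s hs
          have hs0 : (0:ℝ) ≤ s := hTs0.trans hs.1.le
          have hgabs := absg hrmin hrmax hCmin hCmax hnpos hgbound hs0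
          have hns := hnpos s hs0
          have hnsc : n s = n 0 := hconst s hs.1
          rw [Real.norm_eq_abs, abs_mul, abs_of_nonneg hK0]
          rw [hnsc] at hgabs
          nlinarith [abs_nonneg (g s)]
      apply h1.congr_fun _ measurableSet_Ioc
      intro s hs
      simp only [hq]
      rw [hconst s hs.1]
    have : Ts + 1 ∈ Good := by
      have := hTsGood.union hupper
      rwa [Set.Ioc_union_Ioc_eq_Ioc hTs0 (by linarith)] at this
    have := le_csSup hbdd this
    linarith

lemma comp_upper (hrmin : 0 < rmin) (hrr : rmin ≤ rmax) (hCmin : 0 < Cmin) (hCmax : Cmin ≤ Cmax)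
    (hnpos : ∀ t, 0 ≤ t → 0 ≤ n t)
    (hg : Measurable g)
    (hgbound : ∀ s, 0 ≤ s → rmin - Cmax * n s ≤ g s ∧ g s ≤ rmax - Cmin * n s)
    (hsol : ∀ t, 0 ≤ t → n t = n 0 + ∫ s in (0:ℝ)..t, g s * n s)
    {nhigh : ℝ → ℝ} (hhigh0 : nhigh 0 = n 0)
    (hhigh : ∀ t, HasDerivAt nhigh ((rmax - Cmin * nhigh t) * nhigh t) t) :
    ∀ t, 0 ≤ t → n t ≤ nhigh t := by
  have hrmax : 0 < rmax := lt_of_lt_of_le hrmin hrr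
  have hCmax : 0 < Cmax := lt_of_lt_of_le hCmin hCmax
  have hn00 : 0 ≤ n 0 := hnpos 0 le_rfl
  have hGoodAll := good_all hrmin hrmax hCmin.le hCmax.le hnpos hg hgbound hsol
  have hnhc : Continuous nhigh :=
    continuous_iff_continuousAt.2 fun t => (hhigh t).differentiableAt.continuousAt
  have hfhc : Continuous (fun s => (rmax - Cmin * nhigh s) * nhigh s) := by
    exact ((continuous_const.sub (continuous_const.mul hnhc)).mul hnhc)
  -- continuity of n at positive points
  have hnat : ∀ t : ℝ, 0 < t → ContinuousAt n t := fun t ht =>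
    (contOfGood hsol (hGoodAll (t + 1))).continuousAt (Icc_mem_nhds ht (by linarith))
  intro t₁ ht₁
  by_contra hcon
  push_neg at hcon
  rcases eq_or_lt_of_le ht₁ with h0 | ht₁pos
  · rw [← h0] at hcon; rw [hhigh0] at hcon; exact absurd hcon (lt_irrefl _)
  set w : ℝ → ℝ := fun s => n s - nhigh s with hwdef
  have hcnIcc : ContinuousOn n (Icc 0 t₁) := contOfGood hsol (hGoodAll t₁)
  have hwcont : ContinuousOn w (Icc 0 t₁) := hcnIcc.sub hnhc.continuousOn
  have hw0 : w 0 ≤ 0 := by simp [hwdef, hhigh0]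
  have hwt₁ : 0 < w t₁ := by simp [hwdef]; linarith
  obtain ⟨τ, hτmem, hwτ, hwpos⟩ := first_cross ht₁ hwcont hw0 hwt₁
  have hτ0 : 0 ≤ τ := hτmem.1
  have hτt₁ : τ < t₁ := hτmem.2
  -- bounds
  set K₁ : ℝ := n 0 * Real.exp (rmax * t₁) with hK₁
  have hK₁0 : 0 ≤ K₁ := mul_nonneg hn00 (Real.exp_nonneg _)
  have hnle : ∀ s ∈ Icc (0:ℝ) t₁, n s ≤ K₁ := by
    intro s hs
    have h1 := boundOfGood hrmax hCmin.le hnpos (fun u hu => (hgbound u hu).2) hsol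
      ht₁ (hGoodAll t₁) s hs
    have h2 : Real.exp (rmax * s) ≤ Real.exp (rmax * t₁) :=
      Real.exp_le_exp.2 (by nlinarith [hs.2, hs.1])
    nlinarith
  obtain ⟨Kh, hKh⟩ := (isCompact_Icc (a := (0:ℝ)) (b := t₁)).exists_bound_of_continuousOn
    hnhc.continuousOn
  have hKh0 : 0 ≤ Kh := le_trans (norm_nonneg _) (hKh 0 (left_mem_Icc.2 ht₁))
  set L : ℝ := rmax + Cmin * (K₁ + Kh) with hL
  have hLpos : 0 < L := by nlinarith
  -- interval integrability of q
  have hqiv : ∀ a b : ℝ, 0 ≤ a → a ≤ b → IntervalIntegrable (fun s => g s * n s) volume a b := by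
    intro a b ha hab
    rw [intervalIntegrable_iff_integrableOn_Ioc_of_le hab]
    exact (hGoodAll b).mono_set (Ioc_subset_Ioc_left ha)
  have hwI : ∀ t ∈ Icc τ t₁, IntervalIntegrable w volume τ t := by
    intro t ht
    apply ContinuousOn.intervalIntegrable
    rw [uIcc_of_le ht.1]
    exact hwcont.mono (Icc_subset_Icc hτ0 ht.2)
  set W : ℝ → ℝ := fun t => ∫ s in τ..t, w s with hWdef
  -- the key integral inequality
  have key : ∀ t ∈ Icc τ t₁, w t ≤ L * W t := by
    intro t ht
    have ht0 : 0 ≤ t := hτ0.trans ht.1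
    have hnt : n t - n τ = ∫ s in τ..t, g s * n s := by
      rw [hsol t ht0, hsol τ hτ0]
      have h := integral_interval_sub_left (hqiv 0 t le_rfl ht0) (hqiv 0 τ le_rfl hτ0)
      rw [← h]
      ring
    have hht : nhigh t - nhigh τ = ∫ s in τ..t, (rmax - Cmin * nhigh s) * nhigh s := by
      rw [integral_eq_sub_of_hasDerivAt (fun x _ => hhigh x) (hfhc.intervalIntegrable τ t)]
    have hwint : w t = ∫ s in τ..t, (g s * n s - (rmax - Cmin * nhigh s) * nhigh s) := by
      have h2 : w t = w τ + ((n t - n τ) - (nhigh t - nhigh τ)) := by simp [hwdef]; ring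
      rw [h2, hwτ, hnt, hht, zero_add,
        intervalIntegral.integral_sub (hqiv τ t hτ0 ht.1) (hfhc.intervalIntegrable τ t)]
    rw [hwint]
    have hmono : (∫ s in τ..t, (g s * n s - (rmax - Cmin * nhigh s) * nhigh s))
        ≤ ∫ s in τ..t, L * w s := by
      apply intervalIntegral.integral_mono_on ht.1
        ((hqiv τ t hτ0 ht.1).sub (hfhc.intervalIntegrable τ t))
        (by
          apply ContinuousOn.intervalIntegrable
          rw [uIcc_of_le ht.1]
          exact continuousOn_const.mul (hwcont.mono (Icc_subset_Icc hτ0 ht.2)))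
      intro s hs
      have hs0 : 0 ≤ s := hτ0.trans hs.1
      have hns : 0 ≤ n s := hnpos s hs0
      have hsIcc : s ∈ Icc (0:ℝ) t₁ := ⟨hs0, hs.2.trans ht.2⟩
      have hws : 0 ≤ w s := by
        rcases eq_or_lt_of_le hs.1 with h | h
        · rw [← h, hwτ]
        · exact (hwpos s ⟨h, hs.2.trans ht.2⟩).le
      have hq1 : g s * n s ≤ (rmax - Cmin * n s) * n s :=
        mul_le_mul_of_nonneg_right (le_trans (hgbound s hs0).2 (by nlinarith)) hns
      have habs := hKh s hsIcc
      rw [Real.norm_eq_abs, abs_le] at habs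
      have hnles := hnle s hsIcc
      have hfac : rmax - Cmin * (n s + nhigh s) ≤ L := by nlinarith
      have heq : (rmax - Cmin * n s) * n s - (rmax - Cmin * nhigh s) * nhigh s
          = w s * (rmax - Cmin * (n s + nhigh s)) := by simp [hwdef]; ring
      have h3 : w s * (rmax - Cmin * (n s + nhigh s)) ≤ w s * L :=
        mul_le_mul_of_nonneg_left hfac hws
      calc g s * n s - (rmax - Cmin * nhigh s) * nhigh s
          ≤ (rmax - Cmin * n s) * n s - (rmax - Cmin * nhigh s) * nhigh s := by linarith
        _ = w s * (rmax - Cmin * (n s + nhigh s)) := heq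
        _ ≤ w s * L := h3
        _ = L * w s := mul_comm _ _
    refine hmono.trans ?_
    rw [hWdef]
    rw [intervalIntegral.integral_const_mul]
  -- W is continuous on [τ, t₁] and differentiable inside
  have hWcont : ContinuousOn W (Icc τ t₁) := by
    have h1 : IntegrableOn w (uIcc τ t₁) := by
      rw [uIcc_of_le hτt₁.le]
      exact (hwcont.mono (Icc_subset_Icc hτ0 le_rfl)).integrableOn_Icc
    have := intervalIntegral.continuousOn_primitive_interval h1
    rwa [uIcc_of_le hτt₁.le] at this
  have hW' : ∀ t ∈ Ioo τ t₁, HasDerivAt W (w t) t := by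
    intro t ht
    have ht0 : 0 < t := lt_of_le_of_lt hτ0 ht.1
    have hwcIoi : ContinuousOn w (Ioi 0) := fun x hx =>
      (((hnat x hx).sub hnhc.continuousAt)).continuousWithinAt
    apply intervalIntegral.integral_hasDerivAt_right (hwI t (Ioo_subset_Icc_self ht))
      (ContinuousOn.stronglyMeasurableAtFilter isOpen_Ioi hwcIoi t ht0)
      (((hnat t ht0).sub hnhc.continuousAt))
  have hWle := gron_le_zero (K := L) hWcont
    (fun t ht => ⟨w t, hW' t ht, key t (Ioo_subset_Icc_self ht)⟩)
    (by simp [hWdef])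
  have h1 := hWle t₁ (right_mem_Icc.2 hτt₁.le)
  have h2 := key t₁ (right_mem_Icc.2 hτt₁.le)
  nlinarith

lemma comp_lower (hrmin : 0 < rmin) (hrr : rmin ≤ rmax) (hCmin : 0 < Cmin) (hCmax : Cmin ≤ Cmax)
    (hnpos : ∀ t, 0 ≤ t → 0 ≤ n t)
    (hg : Measurable g)
    (hgbound : ∀ s, 0 ≤ s → rmin - Cmax * n s ≤ g s ∧ g s ≤ rmax - Cmin * n s)
    (hsol : ∀ t, 0 ≤ t → n t = n 0 + ∫ s in (0:ℝ)..t, g s * n s)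
    {nlow : ℝ → ℝ} (hlow0 : nlow 0 = n 0)
    (hlow : ∀ t, HasDerivAt nlow ((rmin - Cmax * nlow t) * nlow t) t) :
    ∀ t, 0 ≤ t → nlow t ≤ n t := by
  have hrmax : 0 < rmax := lt_of_lt_of_le hrmin hrr
  have hCmax' : 0 < Cmax := lt_of_lt_of_le hCmin hCmax
  have hn00 : 0 ≤ n 0 := hnpos 0 le_rfl
  have hGoodAll := good_all hrmin hrmax hCmin.le hCmax'.le hnpos hg hgbound hsol
  have hnlc : Continuous nlow :=
    continuous_iff_continuousAt.2 fun t => (hlow t).differentiableAt.continuousAt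
  have hflc : Continuous (fun s => (rmin - Cmax * nlow s) * nlow s) :=
    ((continuous_const.sub (continuous_const.mul hnlc)).mul hnlc)
  have hnat : ∀ t : ℝ, 0 < t → ContinuousAt n t := fun t ht =>
    (contOfGood hsol (hGoodAll (t + 1))).continuousAt (Icc_mem_nhds ht (by linarith))
  intro t₁ ht₁
  by_contra hcon
  push_neg at hcon
  rcases eq_or_lt_of_le ht₁ with h0 | ht₁pos
  · rw [← h0] at hcon; rw [hlow0] at hcon; exact absurd hcon (lt_irrefl _)
  set w : ℝ → ℝ := fun s => nlow s - n s with hwdef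
  have hcnIcc : ContinuousOn n (Icc 0 t₁) := contOfGood hsol (hGoodAll t₁)
  have hwcont : ContinuousOn w (Icc 0 t₁) := hnlc.continuousOn.sub hcnIcc
  have hw0 : w 0 ≤ 0 := by simp [hwdef, hlow0]
  have hwt₁ : 0 < w t₁ := by simp [hwdef]; linarith
  obtain ⟨τ, hτmem, hwτ, hwpos⟩ := first_cross ht₁ hwcont hw0 hwt₁
  have hτ0 : 0 ≤ τ := hτmem.1
  have hτt₁ : τ < t₁ := hτmem.2
  set K₁ : ℝ := n 0 * Real.exp (rmax * t₁) with hK₁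
  have hK₁0 : 0 ≤ K₁ := mul_nonneg hn00 (Real.exp_nonneg _)
  have hnle : ∀ s ∈ Icc (0:ℝ) t₁, n s ≤ K₁ := by
    intro s hs
    have h1 := boundOfGood hrmax hCmin.le hnpos (fun u hu => (hgbound u hu).2) hsol
      ht₁ (hGoodAll t₁) s hs
    have h2 : Real.exp (rmax * s) ≤ Real.exp (rmax * t₁) :=
      Real.exp_le_exp.2 (by nlinarith [hs.2, hs.1])
    nlinarith
  obtain ⟨Kl, hKl⟩ := (isCompact_Icc (a := (0:ℝ)) (b := t₁)).exists_bound_of_continuousOn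
    hnlc.continuousOn
  have hKl0 : 0 ≤ Kl := le_trans (norm_nonneg _) (hKl 0 (left_mem_Icc.2 ht₁))
  set L : ℝ := rmin + Cmax * (K₁ + Kl) with hL
  have hLpos : 0 < L := by nlinarith
  have hqiv : ∀ a b : ℝ, 0 ≤ a → a ≤ b → IntervalIntegrable (fun s => g s * n s) volume a b := by
    intro a b ha hab
    rw [intervalIntegrable_iff_integrableOn_Ioc_of_le hab]
    exact (hGoodAll b).mono_set (Ioc_subset_Ioc_left ha)
  have hwI : ∀ t ∈ Icc τ t₁, IntervalIntegrable w volume τ t := by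
    intro t ht
    apply ContinuousOn.intervalIntegrable
    rw [uIcc_of_le ht.1]
    exact hwcont.mono (Icc_subset_Icc hτ0 ht.2)
  set W : ℝ → ℝ := fun t => ∫ s in τ..t, w s with hWdef
  have key : ∀ t ∈ Icc τ t₁, w t ≤ L * W t := by
    intro t ht
    have ht0 : 0 ≤ t := hτ0.trans ht.1
    have hnt : n t - n τ = ∫ s in τ..t, g s * n s := by
      rw [hsol t ht0, hsol τ hτ0]
      have h := integral_interval_sub_left (hqiv 0 t le_rfl ht0) (hqiv 0 τ le_rfl hτ0)
      rw [← h]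
      ring
    have hht : nlow t - nlow τ = ∫ s in τ..t, (rmin - Cmax * nlow s) * nlow s := by
      rw [integral_eq_sub_of_hasDerivAt (fun x _ => hlow x) (hflc.intervalIntegrable τ t)]
    have hwint : w t = ∫ s in τ..t, ((rmin - Cmax * nlow s) * nlow s - g s * n s) := by
      have h2 : w t = w τ + ((nlow t - nlow τ) - (n t - n τ)) := by simp [hwdef]; ring
      rw [h2, hwτ, hnt, hht, zero_add,
        intervalIntegral.integral_sub (hflc.intervalIntegrable τ t) (hqiv τ t hτ0 ht.1)]
    rw [hwint]
    have hmono : (∫ s in τ..t, ((rmin - Cmax * nlow s) * nlow s - g s * n s))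
        ≤ ∫ s in τ..t, L * w s := by
      apply intervalIntegral.integral_mono_on ht.1
        ((hflc.intervalIntegrable τ t).sub (hqiv τ t hτ0 ht.1))
        (by
          apply ContinuousOn.intervalIntegrable
          rw [uIcc_of_le ht.1]
          exact continuousOn_const.mul (hwcont.mono (Icc_subset_Icc hτ0 ht.2)))
      intro s hs
      have hs0 : 0 ≤ s := hτ0.trans hs.1
      have hns : 0 ≤ n s := hnpos s hs0
      have hsIcc : s ∈ Icc (0:ℝ) t₁ := ⟨hs0, hs.2.trans ht.2⟩
      have hws : 0 ≤ w s := by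
        rcases eq_or_lt_of_le hs.1 with h | h
        · rw [← h, hwτ]
        · exact (hwpos s ⟨h, hs.2.trans ht.2⟩).le
      have hq1 : (rmin - Cmax * n s) * n s ≤ g s * n s :=
        mul_le_mul_of_nonneg_right (hgbound s hs0).1 hns
      have habs := hKl s hsIcc
      rw [Real.norm_eq_abs, abs_le] at habs
      have hnles := hnle s hsIcc
      have hfac : rmin - Cmax * (nlow s + n s) ≤ L := by nlinarith
      have heq : (rmin - Cmax * nlow s) * nlow s - (rmin - Cmax * n s) * n s
          = w s * (rmin - Cmax * (nlow s + n s)) := by simp [hwdef]; ring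
      have h3 : w s * (rmin - Cmax * (nlow s + n s)) ≤ w s * L :=
        mul_le_mul_of_nonneg_left hfac hws
      calc (rmin - Cmax * nlow s) * nlow s - g s * n s
          ≤ (rmin - Cmax * nlow s) * nlow s - (rmin - Cmax * n s) * n s := by linarith
        _ = w s * (rmin - Cmax * (nlow s + n s)) := heq
        _ ≤ w s * L := h3
        _ = L * w s := mul_comm _ _
    refine hmono.trans ?_
    rw [hWdef]
    rw [intervalIntegral.integral_const_mul]
  have hWcont : ContinuousOn W (Icc τ t₁) := by
    have h1 : IntegrableOn w (uIcc τ t₁) := by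
      rw [uIcc_of_le hτt₁.le]
      exact (hwcont.mono (Icc_subset_Icc hτ0 le_rfl)).integrableOn_Icc
    have := intervalIntegral.continuousOn_primitive_interval h1
    rwa [uIcc_of_le hτt₁.le] at this
  have hW' : ∀ t ∈ Ioo τ t₁, HasDerivAt W (w t) t := by
    intro t ht
    have ht0 : 0 < t := lt_of_le_of_lt hτ0 ht.1
    have hwcIoi : ContinuousOn w (Ioi 0) := fun x hx =>
      ((hnlc.continuousAt.sub (hnat x hx))).continuousWithinAt
    apply intervalIntegral.integral_hasDerivAt_right (hwI t (Ioo_subset_Icc_self ht))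
      (ContinuousOn.stronglyMeasurableAtFilter isOpen_Ioi hwcIoi t ht0)
      ((hnlc.continuousAt.sub (hnat t ht0)))
  have hWle := gron_le_zero (K := L) hWcont
    (fun t ht => ⟨w t, hW' t ht, key t (Ioo_subset_Icc_self ht)⟩)
    (by simp [hWdef])
  have h1 := hWle t₁ (right_mem_Icc.2 hτt₁.le)
  have h2 := key t₁ (right_mem_Icc.2 hτt₁.le)
  nlinarith


lemma nlow_pos {rmin Cmax : ℝ} (hrmin : 0 < rmin) (hCmax : 0 < Cmax) {nlow : ℝ → ℝ}
    (h0 : 0 < nlow 0)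
    (hlow : ∀ t, HasDerivAt nlow ((rmin - Cmax * nlow t) * nlow t) t) :
    ∀ t, 0 ≤ t → 0 < nlow t := by
  have hnlc : Continuous nlow :=
    continuous_iff_continuousAt.2 fun t => (hlow t).differentiableAt.continuousAt
  intro t2 ht2
  by_contra hc
  push_neg at hc
  have ht2pos : 0 < t2 := by
    rcases eq_or_lt_of_le ht2 with h | h
    · exfalso; rw [← h] at hc; linarith
    · exact h
  set S := {s ∈ Icc (0:ℝ) t2 | nlow s ≤ 0} with hS
  have hSclosed : IsClosed S := by
    have heq : S = Icc 0 t2 ∩ nlow ⁻¹' (Iic 0) := by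
      ext x; simp only [hS, mem_setOf_eq, mem_inter_iff, mem_preimage, mem_Iic]
    rw [heq]
    exact hnlc.continuousOn.preimage_isClosed_of_isClosed isClosed_Icc isClosed_Iic
  have hSne : S.Nonempty := ⟨t2, ⟨right_mem_Icc.2 ht2, hc⟩⟩
  have hSbdd : BddBelow S := ⟨0, fun x hx => hx.1.1⟩
  set σ := sInf S with hσdef
  have hσS : σ ∈ S := hSclosed.csInf_mem hSne hSbdd
  have hposlt : ∀ s ∈ Ico (0:ℝ) σ, 0 < nlow s := by
    intro s hs
    by_contra hle
    push_neg at hle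
    have hsS : s ∈ S := ⟨⟨hs.1, hs.2.le.trans hσS.1.2⟩, hle⟩
    exact absurd (csInf_le hSbdd hsS) (not_le.2 hs.2)
  have hσ0 : 0 < σ := by
    rcases eq_or_lt_of_le hσS.1.1 with h | h
    · exfalso; have := hσS.2; rw [← h] at this; linarith
    · exact h
  have hge : 0 ≤ nlow σ := by
    have hIoo : Ioo 0 σ ∈ 𝓝[<] σ := Ioo_mem_nhdsLT_of_mem ⟨hσ0, le_rfl⟩
    have htd : Tendsto nlow (𝓝[<] σ) (𝓝 (nlow σ)) :=
      (hnlc.continuousAt).continuousWithinAt.tendsto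
    exact ge_of_tendsto htd (eventually_of_mem hIoo
      (fun s hs => (hposlt s ⟨hs.1.le, hs.2⟩).le))
  have hσeq : nlow σ = 0 := le_antisymm hσS.2 hge
  obtain ⟨K, hK⟩ := (isCompact_Icc (a := (0:ℝ)) (b := σ)).exists_bound_of_continuousOn
    hnlc.continuousOn
  have hle : ∀ t ∈ Icc (0:ℝ) σ, nlow (σ - t) ≤ 0 := by
    apply gron_le_zero (K := Cmax * K)
    · exact (hnlc.comp (continuous_const.sub continuous_id)).continuousOn
    · intro t ht
      have hmem : σ - t ∈ Ioo 0 σ := ⟨by linarith [ht.2], by linarith [ht.1]⟩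
      set v := nlow (σ - t) with hv
      have hv0 : 0 < v := hposlt _ ⟨hmem.1.le, hmem.2⟩
      have hvK : v ≤ K := by
        have := hK (σ - t) ⟨hmem.1.le, hmem.2.le⟩
        rw [Real.norm_eq_abs, abs_le] at this
        exact this.2
      have hinner : HasDerivAt (fun u : ℝ => σ - u) (-1) t := by
        simpa using (hasDerivAt_id t).const_sub σ
      have hd : HasDerivAt (fun u => nlow (σ - u)) ((rmin - Cmax * v) * v * (-1)) t :=
        (hlow (σ - t)).comp t hinner
      refine ⟨_, hd, ?_⟩
      show (rmin - Cmax * v) * v * (-1) ≤ Cmax * K * v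
      nlinarith [mul_nonneg (sub_nonneg.2 hvK) hv0.le, mul_nonneg hrmin.le hv0.le]
    · rw [sub_zero, hσeq]
  have := hle σ (right_mem_Icc.2 hσ0.le)
  rw [sub_self] at this
  linarith

lemma nlow_ge {rmin Cmax : ℝ} (hrmin : 0 < rmin) (hCmax : 0 < Cmax) {nlow : ℝ → ℝ}
    (h0 : 0 < nlow 0)
    (hlow : ∀ t, HasDerivAt nlow ((rmin - Cmax * nlow t) * nlow t) t) :
    ∀ t, 0 ≤ t → min (nlow 0) (rmin / Cmax) ≤ nlow t := by
  have hnlc : Continuous nlow :=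
    continuous_iff_continuousAt.2 fun t => (hlow t).differentiableAt.continuousAt
  have hpos := nlow_pos hrmin hCmax h0 hlow
  set m := min (nlow 0) (rmin / Cmax) with hm
  intro t2 ht2
  by_contra hcon
  push_neg at hcon
  have ht2pos : 0 < t2 := by
    rcases eq_or_lt_of_le ht2 with h | h
    · exfalso; rw [← h] at hcon; have := min_le_left (nlow 0) (rmin / Cmax); linarith
    · exact h
  set S := {s ∈ Icc (0:ℝ) t2 | m ≤ nlow s} with hS
  have hSclosed : IsClosed S := by
    have heq : S = Icc 0 t2 ∩ nlow ⁻¹' (Ici m) := by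
      ext x; simp only [hS, mem_setOf_eq, mem_inter_iff, mem_preimage, mem_Ici]
    rw [heq]
    exact hnlc.continuousOn.preimage_isClosed_of_isClosed isClosed_Icc isClosed_Ici
  have hSne : S.Nonempty := ⟨0, ⟨left_mem_Icc.2 ht2, min_le_left _ _⟩⟩
  have hSbdd : BddAbove S := ⟨t2, fun x hx => hx.1.2⟩
  set τ := sSup S with hτdef
  have hτS : τ ∈ S := hSclosed.csSup_mem hSne hSbdd
  have hτt2 : τ < t2 := by
    rcases eq_or_lt_of_le hτS.1.2 with h | h
    · exfalso; have := hτS.2; rw [h] at this; linarith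
    · exact h
  have hlt : ∀ s ∈ Ioc τ t2, nlow s < m := by
    intro s hs
    by_contra hle
    push_neg at hle
    have hsS : s ∈ S := ⟨⟨hτS.1.1.trans hs.1.le, hs.2⟩, hle⟩
    exact absurd (le_csSup hSbdd hsS) (not_le.2 hs.1)
  have hmono : MonotoneOn nlow (Icc τ t2) := by
    apply monotoneOn_of_deriv_nonneg (convex_Icc τ t2) hnlc.continuousOn
    · intro x hx
      exact (hlow x).differentiableAt.differentiableWithinAt
    · intro x hx
      rw [interior_Icc] at hx
      rw [(hlow x).deriv]
      have hx0 : 0 ≤ x := hτS.1.1.trans hx.1.le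
      have h1 : 0 < nlow x := hpos x hx0
      have h2 : nlow x < m := hlt x ⟨hx.1, hx.2.le⟩
      have h3 : m ≤ rmin / Cmax := min_le_right _ _
      have h4 : nlow x < rmin / Cmax := lt_of_lt_of_le h2 h3
      have h5 : Cmax * nlow x < rmin := by
        rw [lt_div_iff₀ hCmax] at h4; linarith [h4]
      nlinarith
  have := hmono (left_mem_Icc.2 hτt2.le) (right_mem_Icc.2 hτt2.le) hτt2.le
  have := hτS.2
  linarith [hlt t2 ⟨hτt2, le_rfl⟩]

lemma nhigh_le {rmax Cmin : ℝ} (hrmax : 0 < rmax) (hCmin : 0 < Cmin) {nhigh : ℝ → ℝ}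
    (hhigh : ∀ t, HasDerivAt nhigh ((rmax - Cmin * nhigh t) * nhigh t) t) :
    ∀ t, 0 ≤ t → nhigh t ≤ max (nhigh 0) (rmax / Cmin) := by
  have hnhc : Continuous nhigh :=
    continuous_iff_continuousAt.2 fun t => (hhigh t).differentiableAt.continuousAt
  set M := max (nhigh 0) (rmax / Cmin) with hM
  intro t2 ht2
  by_contra hcon
  push_neg at hcon
  have ht2pos : 0 < t2 := by
    rcases eq_or_lt_of_le ht2 with h | h
    · exfalso; rw [← h] at hcon; have := le_max_left (nhigh 0) (rmax / Cmin); linarith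
    · exact h
  set S := {s ∈ Icc (0:ℝ) t2 | nhigh s ≤ M} with hS
  have hSclosed : IsClosed S := by
    have heq : S = Icc 0 t2 ∩ nhigh ⁻¹' (Iic M) := by
      ext x; simp only [hS, mem_setOf_eq, mem_inter_iff, mem_preimage, mem_Iic]
    rw [heq]
    exact hnhc.continuousOn.preimage_isClosed_of_isClosed isClosed_Icc isClosed_Iic
  have hSne : S.Nonempty := ⟨0, ⟨left_mem_Icc.2 ht2, le_max_left _ _⟩⟩
  have hSbdd : BddAbove S := ⟨t2, fun x hx => hx.1.2⟩
  set τ := sSup S with hτdef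
  have hτS : τ ∈ S := hSclosed.csSup_mem hSne hSbdd
  have hτt2 : τ < t2 := by
    rcases eq_or_lt_of_le hτS.1.2 with h | h
    · exfalso; have := hτS.2; rw [h] at this; linarith
    · exact h
  have hgt : ∀ s ∈ Ioc τ t2, M < nhigh s := by
    intro s hs
    by_contra hle
    push_neg at hle
    have hsS : s ∈ S := ⟨⟨hτS.1.1.trans hs.1.le, hs.2⟩, hle⟩
    exact absurd (le_csSup hSbdd hsS) (not_le.2 hs.1)
  have hanti : AntitoneOn nhigh (Icc τ t2) := by
    apply antitoneOn_of_deriv_nonpos (convex_Icc τ t2) hnhc.continuousOn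
    · intro x hx
      exact (hhigh x).differentiableAt.differentiableWithinAt
    · intro x hx
      rw [interior_Icc] at hx
      rw [(hhigh x).deriv]
      have h2 : M < nhigh x := hgt x ⟨hx.1, hx.2.le⟩
      have h3 : rmax / Cmin ≤ M := le_max_right _ _
      have h4 : rmax / Cmin < nhigh x := lt_of_le_of_lt h3 h2
      have h5 : rmax < Cmin * nhigh x := by
        rw [div_lt_iff₀ hCmin] at h4; linarith [h4]
      have h6 : 0 < nhigh x := lt_trans (div_pos hrmax hCmin) h4
      nlinarith
  have := hanti (left_mem_Icc.2 hτt2.le) (right_mem_Icc.2 hτt2.le) hτt2.le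
  have := hτS.2
  linarith [hgt t2 ⟨hτt2, le_rfl⟩]

end main
end helpers

/-- Comparison principle for the total mass: a nonnegative solution of an integral
equation with logistic-type bounds on the growth rate is squeezed between the solutions
of two logistic ODEs; in particular it stays between positive bounds for t ≥ t₀ > 0 if
it starts positive. -/
theorem total_mass_logistic_comparison
    (rmin rmax Cmin Cmax : ℝ)
    (hr : 0 < rmin) (hrr : rmin ≤ rmax) (hc : 0 < Cmin) (hcc : Cmin ≤ Cmax)
    (n g : ℝ → ℝ)
    (hnpos : ∀ t, 0 ≤ t → 0 ≤ n t)
    (hg : Measurable g)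
    (hgbound : ∀ s, 0 ≤ s → rmin - Cmax * n s ≤ g s ∧ g s ≤ rmax - Cmin * n s)
    (hsol : ∀ t, 0 ≤ t → n t = n 0 + ∫ s in (0:ℝ)..t, g s * n s)
    (nlow nhigh : ℝ → ℝ)
    (hlow0 : nlow 0 = n 0) (hhigh0 : nhigh 0 = n 0)
    (hlow : ∀ t, HasDerivAt nlow ((rmin - Cmax * nlow t) * nlow t) t)
    (hhigh : ∀ t, HasDerivAt nhigh ((rmax - Cmin * nhigh t) * nhigh t) t) :
    (∀ t, 0 ≤ t → nlow t ≤ n t ∧ n t ≤ nhigh t) ∧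
    (0 < n 0 → ∀ t₀ : ℝ, 0 < t₀ →
      ∃ m M : ℝ, 0 < m ∧ ∀ t, t₀ ≤ t → m ≤ n t ∧ n t ≤ M) := by
  have hrmax : 0 < rmax := lt_of_lt_of_le hr hrr
  have hCmax : 0 < Cmax := lt_of_lt_of_le hc hcc
  have hupper := comp_upper hr hrr hc hcc hnpos hg hgbound hsol hhigh0 hhigh
  have hlower := comp_lower hr hrr hc hcc hnpos hg hgbound hsol hlow0 hlow
  refine ⟨fun t ht => ⟨hlower t ht, hupper t ht⟩, ?_⟩
  intro hn0 t₀ ht₀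
  have hl0 : 0 < nlow 0 := by rw [hlow0]; exact hn0
  refine ⟨min (nlow 0) (rmin / Cmax), max (nhigh 0) (rmax / Cmin),
    lt_min hl0 (div_pos hr hCmax), ?_⟩
  intro t ht
  have ht0 : 0 ≤ t := le_trans ht₀.le ht
  exact ⟨(nlow_ge hr hCmax hl0 hlow t ht0).trans (hlower t ht0),
    (hupper t ht0).trans (nhigh_le hrmax hc hhigh t ht0)⟩
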